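/- Let n ≥ 3 be an integer and assume that E[ε_u^m] = (m−1)·E[ε_u^{m−2}]·E[ε_u²] holds for every integer m with 3 ≤ m < n. Then E[D^{n−1}·Z] − (n−1)·E[D·Z]·E[D^{n−2}] = α_d^{n−1}·α_z·( E[ε_u^n] − (n−1)·E[ε_u^{n−2}]·E[ε_u²] ). -/

import Mathlib

open MeasureTheory ProbabilityTheory

/-- Under the moment recursion for all 3 ≤ m < n,
    E[D^{n−1}Z] − (n−1)E[DZ]E[D^{n−2}]
      = α_d^{n−1}·α_z·(E[ε_u^n] − (n−1)E[ε_u^{n−2}]E[ε_u²]). -/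
theorem cross_moment_identity_D
    {Ω : Type*} [MeasurableSpace Ω] {μ : MeasureTheory.Measure Ω}
    [MeasureTheory.IsProbabilityMeasure μ]
    (εu εz εd εy : Ω → ℝ)
    (hmu : Measurable εu) (hmz : Measurable εz) (hmd : Measurable εd) (hmy : Measurable εy)
    (hind : ProbabilityTheory.iIndepFun ![εu, εz, εd, εy] μ)
    (h0u : ∫ ω, εu ω ∂μ = 0) (h0z : ∫ ω, εz ω ∂μ = 0)
    (h0d : ∫ ω, εd ω ∂μ = 0) (h0y : ∫ ω, εy ω ∂μ = 0)
    (hLu : ∀ n : ℕ, MeasureTheory.MemLp εu n μ) (hLz : ∀ n : ℕ, MeasureTheory.MemLp εz n μ)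
    (hLd : ∀ n : ℕ, MeasureTheory.MemLp εd n μ) (hLy : ∀ n : ℕ, MeasureTheory.MemLp εy n μ)
    (αz αd β γ : ℝ) (Z D Y : Ω → ℝ)
    (hZ : ∀ ω, Z ω = αz * εu ω + εz ω)
    (hD : ∀ ω, D ω = αd * εu ω + εd ω)
    (hY : ∀ ω, Y ω = β * D ω + γ * εu ω + εy ω)
    (n : ℕ) (hn : 3 ≤ n)
    (hrec : ∀ m : ℕ, 3 ≤ m → m < n →
      ∫ ω, εu ω ^ m ∂μ =
        ((m : ℝ) - 1) * (∫ ω, εu ω ^ (m - 2) ∂μ) * ∫ ω, εu ω ^ 2 ∂μ) :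
    (∫ ω, D ω ^ (n - 1) * Z ω ∂μ) -
      ((n : ℝ) - 1) * (∫ ω, D ω * Z ω ∂μ) * (∫ ω, D ω ^ (n - 2) ∂μ) =
    αd ^ (n - 1) * αz *
      ((∫ ω, εu ω ^ n ∂μ) -
        ((n : ℝ) - 1) * (∫ ω, εu ω ^ (n - 2) ∂μ) * ∫ ω, εu ω ^ 2 ∂μ) := by
  -- measurability of the family
  have hmeas : ∀ i, Measurable (![εu, εz, εd, εy] i) := by
    intro i
    fin_cases i <;> assumption
  -- integrability of powers
  have Ipow : ∀ (f : Ω → ℝ), Measurable f → (∀ m : ℕ, MeasureTheory.MemLp f m μ) →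
      ∀ k : ℕ, Integrable (fun ω => f ω ^ k) μ := by
    intro f hm hL k
    have h := (hL k).integrable_norm_rpow'
    refine h.mono' ((hm.pow_const k).aestronglyMeasurable) ?_
    filter_upwards with ω
    rw [ENNReal.toReal_natCast, Real.rpow_natCast]
    simp [abs_pow]
  have Iu : ∀ k, Integrable (fun ω => εu ω ^ k) μ := Ipow εu hmu hLu
  have Id : ∀ k, Integrable (fun ω => εd ω ^ k) μ := Ipow εd hmd hLd
  have Iz : Integrable εz μ := by
    have := (hLz 1).integrable (by norm_num)
    exact this
  -- independence of powers of εu and εd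
  have hud : ∀ i j, IndepFun (fun ω => εu ω ^ i) (fun ω => εd ω ^ j) μ := by
    intro i j
    have h02 : IndepFun εu εd μ := hind.indepFun (show (0 : Fin 4) ≠ 2 by decide)
    exact h02.comp (measurable_id.pow_const i) (measurable_id.pow_const j)
  have Iud : ∀ i j, Integrable (fun ω => εu ω ^ i * εd ω ^ j) μ :=
    fun i j => (hud i j).integrable_mul (Iu i) (Id j)
  have Mud : ∀ i j, ∫ ω, εu ω ^ i * εd ω ^ j ∂μ
      = (∫ ω, εu ω ^ i ∂μ) * ∫ ω, εd ω ^ j ∂μ :=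
    fun i j => ProbabilityTheory.IndepFun.integral_mul_eq_mul_integral (hud i j) (Iu i).1 (Id j).1
  -- independence of products (εu^i εd^j) from εz
  have hudz : ∀ i j, IndepFun (fun ω => εu ω ^ i * εd ω ^ j) εz μ := by
    intro i j
    have h := ProbabilityTheory.iIndepFun.indepFun_prodMk hind hmeas 0 2 1 (by decide) (by decide)
    have h' := h.comp (φ := fun p : ℝ × ℝ => p.1 ^ i * p.2 ^ j) (ψ := id)
      ((measurable_fst.pow_const i).mul (measurable_snd.pow_const j)) measurable_id
    exact h'
  have Iudz : ∀ i j, Integrable (fun ω => εu ω ^ i * εd ω ^ j * εz ω) μ :=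
    fun i j => (hudz i j).integrable_mul (Iud i j) Iz
  have Mudz : ∀ i j, ∫ ω, εu ω ^ i * εd ω ^ j * εz ω ∂μ = 0 := by
    intro i j
    have := ProbabilityTheory.IndepFun.integral_mul_eq_mul_integral (hudz i j) (Iud i j).1 Iz.1
    rw [show ((fun ω => εu ω ^ i * εd ω ^ j) * εz) = fun ω => εu ω ^ i * εd ω ^ j * εz ω from rfl]
      at this
    rw [this, h0z, mul_zero]
  -- pointwise binomial expansion
  have hpt : ∀ (N a : ℕ) (ω : Ω), (αd * εu ω + εd ω) ^ N * εu ω ^ a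
      = ∑ k ∈ Finset.range (N + 1),
          (N.choose k : ℝ) * αd ^ k * (εu ω ^ (k + a) * εd ω ^ (N - k)) := by
    intro N a ω
    rw [add_pow, Finset.sum_mul]
    refine Finset.sum_congr rfl fun k _ => ?_
    rw [mul_pow, pow_add]
    ring
  have hptz : ∀ (N : ℕ) (ω : Ω), (αd * εu ω + εd ω) ^ N * εz ω
      = ∑ k ∈ Finset.range (N + 1),
          (N.choose k : ℝ) * αd ^ k * (εu ω ^ k * εd ω ^ (N - k) * εz ω) := by
    intro N ω
    rw [add_pow, Finset.sum_mul]
    refine Finset.sum_congr rfl fun k _ => ?_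
    rw [mul_pow]
    ring
  -- integrability of the expanded expressions
  have IP : ∀ N a : ℕ, Integrable (fun ω => (αd * εu ω + εd ω) ^ N * εu ω ^ a) μ := by
    intro N a
    have : (fun ω => (αd * εu ω + εd ω) ^ N * εu ω ^ a)
        = fun ω => ∑ k ∈ Finset.range (N + 1),
            (N.choose k : ℝ) * αd ^ k * (εu ω ^ (k + a) * εd ω ^ (N - k)) :=
      funext (hpt N a)
    rw [this]
    exact integrable_finset_sum _ fun k _ => (Iud (k + a) (N - k)).const_mul _
  have IPz : ∀ N : ℕ, Integrable (fun ω => (αd * εu ω + εd ω) ^ N * εz ω) μ := by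
    intro N
    have : (fun ω => (αd * εu ω + εd ω) ^ N * εz ω)
        = fun ω => ∑ k ∈ Finset.range (N + 1),
            (N.choose k : ℝ) * αd ^ k * (εu ω ^ k * εd ω ^ (N - k) * εz ω) :=
      funext (hptz N)
    rw [this]
    exact integrable_finset_sum _ fun k _ => (Iudz k (N - k)).const_mul _
  -- expectation of the expansions
  have EP : ∀ N a : ℕ, ∫ ω, (αd * εu ω + εd ω) ^ N * εu ω ^ a ∂μ
      = ∑ k ∈ Finset.range (N + 1),
          (N.choose k : ℝ) * αd ^ k * ((∫ ω, εu ω ^ (k + a) ∂μ) * ∫ ω, εd ω ^ (N - k) ∂μ) := by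
    intro N a
    simp only [hpt N a]
    rw [MeasureTheory.integral_finset_sum _ fun k _ => (Iud (k + a) (N - k)).const_mul _]
    refine Finset.sum_congr rfl fun k _ => ?_
    rw [MeasureTheory.integral_const_mul, Mud]
  have EPz : ∀ N : ℕ, ∫ ω, (αd * εu ω + εd ω) ^ N * εz ω ∂μ = 0 := by
    intro N
    simp only [hptz N]
    rw [MeasureTheory.integral_finset_sum _ fun k _ => (Iudz k (N - k)).const_mul _]
    refine Finset.sum_eq_zero fun k _ => ?_
    rw [MeasureTheory.integral_const_mul, Mudz, mul_zero]
  -- formula for E[D^N * Z]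
  have hDZ : ∀ N : ℕ, ∫ ω, D ω ^ N * Z ω ∂μ
      = αz * ∑ k ∈ Finset.range (N + 1),
          (N.choose k : ℝ) * αd ^ k * ((∫ ω, εu ω ^ (k + 1) ∂μ) * ∫ ω, εd ω ^ (N - k) ∂μ) := by
    intro N
    have hpt2 : (fun ω => D ω ^ N * Z ω)
        = fun ω => αz * ((αd * εu ω + εd ω) ^ N * εu ω ^ 1)
            + (αd * εu ω + εd ω) ^ N * εz ω := by
      funext ω
      rw [hD, hZ]
      ring
    rw [hpt2, MeasureTheory.integral_add ((IP N 1).const_mul αz) (IPz N),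
      MeasureTheory.integral_const_mul, EP, EPz, add_zero]
  -- basic moments
  have hU0 : ∫ ω, εu ω ^ 0 ∂μ = 1 := by simp
  have hU1 : ∫ ω, εu ω ^ 1 ∂μ = 0 := by simpa using h0u
  have hDd0 : ∫ ω, εd ω ^ 0 ∂μ = 1 := by simp
  -- set n = p + 3
  obtain ⟨p, rfl⟩ : ∃ p, n = p + 3 := ⟨n - 3, by omega⟩
  have e1 : p + 3 - 1 = p + 2 := by omega
  have e2 : p + 3 - 2 = p + 1 := by omega
  rw [e1, e2]
  -- compute E[D^{p+2} Z]
  have hA : ∫ ω, D ω ^ (p + 2) * Z ω ∂μ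
      = αz * ∑ k ∈ Finset.range (p + 3),
          ((p + 2).choose k : ℝ) * αd ^ k *
            ((∫ ω, εu ω ^ (k + 1) ∂μ) * ∫ ω, εd ω ^ (p + 2 - k) ∂μ) := hDZ (p + 2)
  -- compute E[D Z]
  have hB : ∫ ω, D ω * Z ω ∂μ = αz * (αd * ∫ ω, εu ω ^ 2 ∂μ) := by
    have h1 : ∫ ω, D ω * Z ω ∂μ = ∫ ω, D ω ^ 1 * Z ω ∂μ := by simp
    rw [h1, hDZ 1]
    rw [Finset.sum_range_succ, Finset.sum_range_one]
    norm_num [hU1, hDd0, h0u]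
  -- compute E[D^{p+1}]
  have hC : ∫ ω, D ω ^ (p + 1) ∂μ
      = ∑ k ∈ Finset.range (p + 2),
          ((p + 1).choose k : ℝ) * αd ^ k *
            ((∫ ω, εu ω ^ k ∂μ) * ∫ ω, εd ω ^ (p + 1 - k) ∂μ) := by
    have h1 : (fun ω => D ω ^ (p + 1))
        = fun ω => (αd * εu ω + εd ω) ^ (p + 1) * εu ω ^ 0 := by
      funext ω
      rw [hD]
      ring
    rw [h1, EP (p + 1) 0]
    simp only [Nat.add_zero]
  -- peeled versions
  have hA' : ∫ ω, D ω ^ (p + 2) * Z ω ∂μ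
      = αz * ((∑ k ∈ Finset.range (p + 2),
          ((p + 2).choose k : ℝ) * αd ^ k *
            ((∫ ω, εu ω ^ (k + 1) ∂μ) * ∫ ω, εd ω ^ (p + 2 - k) ∂μ))
          + αd ^ (p + 2) * ∫ ω, εu ω ^ (p + 3) ∂μ) := by
    rw [hA, show p + 3 = (p + 2) + 1 from rfl, Finset.sum_range_succ]
    simp only [Nat.choose_self, Nat.cast_one, Nat.sub_self, hDd0, mul_one,
      show p + 2 + 1 = p + 3 from rfl]
    ring_nf
    ac_rfl
  have hC' : ∫ ω, D ω ^ (p + 1) ∂μ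
      = (∑ k ∈ Finset.range (p + 1),
          ((p + 1).choose k : ℝ) * αd ^ k *
            ((∫ ω, εu ω ^ k ∂μ) * ∫ ω, εd ω ^ (p + 1 - k) ∂μ))
          + αd ^ (p + 1) * ∫ ω, εu ω ^ (p + 1) ∂μ := by
    rw [hC, show p + 2 = (p + 1) + 1 from rfl, Finset.sum_range_succ]
    simp only [Nat.choose_self, Nat.cast_one, Nat.sub_self, hDd0, mul_one]
    ring_nf
    ac_rfl
  rw [hA', hB, hC']
  -- the cast of (p+3) - 1
  have ec : ((p + 3 : ℕ) : ℝ) - 1 = (p : ℝ) + 2 := by push_cast; ring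
  rw [ec]
  -- the key cancellation of the remaining sums
  have key : ∑ k ∈ Finset.range (p + 2),
        ((p + 2).choose k : ℝ) * αd ^ k *
          ((∫ ω, εu ω ^ (k + 1) ∂μ) * ∫ ω, εd ω ^ (p + 2 - k) ∂μ)
      = ((p : ℝ) + 2) * αd * (∫ ω, εu ω ^ 2 ∂μ) *
          ∑ k ∈ Finset.range (p + 1),
            ((p + 1).choose k : ℝ) * αd ^ k *
              ((∫ ω, εu ω ^ k ∂μ) * ∫ ω, εd ω ^ (p + 1 - k) ∂μ) := by
    rw [Finset.sum_range_succ']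
    simp only [hU1]
    rw [Finset.mul_sum]
    have h0 : ((p + 2).choose 0 : ℝ) * αd ^ 0 * (0 * ∫ ω, εd ω ^ (p + 2 - 0) ∂μ) = 0 := by
      ring
    rw [h0, add_zero]
    refine Finset.sum_congr rfl fun k hk => ?_
    have hk' : k < p + 1 := Finset.mem_range.mp hk
    have ed : p + 2 - (k + 1) = p + 1 - k := by omega
    rw [ed]
    -- termwise identity
    rcases Nat.eq_zero_or_pos k with hk0 | hkpos
    · subst hk0
      have : ((p + 2).choose 1 : ℝ) = (p : ℝ) + 2 := by
        rw [Nat.choose_one_right]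
        push_cast
        ring
      rw [this]
      simp [hU0]
      ring
    · obtain ⟨j, rfl⟩ : ∃ j, k = j + 1 := ⟨k - 1, by omega⟩
      have hm : ∫ ω, εu ω ^ (j + 3) ∂μ
          = ((j : ℝ) + 2) * (∫ ω, εu ω ^ (j + 1) ∂μ) * ∫ ω, εu ω ^ 2 ∂μ := by
        have := hrec (j + 3) (by omega) (by omega)
        have ej : j + 3 - 2 = j + 1 := by omega
        rw [ej] at this
        rw [this]
        push_cast
        ring
      have eidx : j + 1 + 1 + 1 = j + 3 := by omega
      rw [eidx, hm]
      have hnat : ((p + 2).choose (j + 2) : ℝ) * ((j : ℝ) + 2)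
          = ((p : ℝ) + 2) * ((p + 1).choose (j + 1) : ℝ) := by
        have := Nat.add_one_mul_choose_eq (p + 1) (j + 1)
        have h' : (p + 2) * (p + 1).choose (j + 1) = (p + 2).choose (j + 2) * (j + 2) := by
          simpa [Nat.succ_eq_add_one] using this
        have := congrArg (fun x : ℕ => (x : ℝ)) h'
        push_cast at this
        linarith
      have expand : ((p + 2).choose (j + 1 + 1) : ℝ) * αd ^ (j + 1 + 1) *
            (((j : ℝ) + 2) * (∫ ω, εu ω ^ (j + 1) ∂μ) * (∫ ω, εu ω ^ 2 ∂μ) *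
              ∫ ω, εd ω ^ (p + 1 - (j + 1)) ∂μ)
          = (((p + 2).choose (j + 2) : ℝ) * ((j : ℝ) + 2)) * αd ^ (j + 2) *
              ((∫ ω, εu ω ^ (j + 1) ∂μ) * (∫ ω, εu ω ^ 2 ∂μ) *
                ∫ ω, εd ω ^ (p + 1 - (j + 1)) ∂μ) := by
        ring
      rw [expand, hnat]
      ring
  rw [key]
  push_cast
  ring
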